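/- Let h : [n] → {−1, 1} be a 4-wise independent random hash function and let D be a probability distribution on [n]. Define X = (∑_{j∈[n]} h(j) D(j))². Then E[X] = ∑_{j∈[n]} D(j)². -/

import Mathlib

open MeasureTheory ProbabilityTheory

/-- If `h : [n] → {−1,1}` is a 4-wise independent uniform random hash function and `D` is a
probability distribution on `[n]`, then `E[(∑_j h(j)·D(j))²] = ∑_j D(j)²`. -/
theorem stmt_5 {Ω : Type*} [MeasurableSpace Ω] (μ : Measure Ω) [IsProbabilityMeasure μ]
    {n : ℕ} (h : Ω → Fin n → ℝ)
    (hmeas : ∀ j, Measurable (fun ω => h ω j))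
    (hval : ∀ ω j, h ω j = 1 ∨ h ω j = -1)
    (hunif : ∀ j, μ {ω | h ω j = 1} = 1 / 2)
    (h4wise : ∀ s : Finset (Fin n), s.card ≤ 4 →
      iIndepFun (fun (j : s) ω => h ω j) μ)
    (D : Fin n → ℝ) (hD0 : ∀ j, 0 ≤ D j) (hD1 : ∑ j, D j = 1) :
    ∫ ω, (∑ j, h ω j * D j) ^ 2 ∂μ = ∑ j, (D j) ^ 2 := by
  have hbound : ∀ j ω, |h ω j| ≤ 1 := by
    intro j ω; rcases hval ω j with hv | hv <;> simp [hv]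
  have hint : ∀ j, Integrable (fun ω => h ω j) μ := fun j =>
    memLp_one_iff_integrable.mp (MemLp.of_bound (hmeas j).aestronglyMeasurable 1
      (Filter.Eventually.of_forall fun ω => by simpa using hbound j ω))
  have hintmul : ∀ i j, Integrable (fun ω => h ω i * h ω j) μ := fun i j =>
    memLp_one_iff_integrable.mp
      (MemLp.of_bound ((hmeas i).mul (hmeas j)).aestronglyMeasurable 1
      (Filter.Eventually.of_forall fun ω => by
        have hi := hbound i ω; have hj := hbound j ω
        have habs : |h ω i * h ω j| = |h ω i| * |h ω j| := abs_mul _ _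
        rw [Real.norm_eq_abs, habs]
        nlinarith [abs_nonneg (h ω i), abs_nonneg (h ω j)]))
  have hmean : ∀ j, ∫ ω, h ω j ∂μ = 0 := by
    intro j
    have hset : MeasurableSet {ω | h ω j = 1} := (hmeas j) (measurableSet_singleton 1)
    have heq : (fun ω => h ω j)
        = fun ω => 2 * Set.indicator {ω | h ω j = 1} (fun _ => (1:ℝ)) ω - 1 := by
      funext ω
      rcases hval ω j with hv | hv
      · rw [Set.indicator_of_mem (by simpa [Set.mem_setOf_eq] using hv)]
        simp [hv]; norm_num
      · rw [Set.indicator_of_notMem (by simp [Set.mem_setOf_eq, hv]; norm_num)]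
        simp [hv]
    rw [heq, integral_sub (((integrable_const (1:ℝ)).indicator hset).const_mul 2)
        (integrable_const (1:ℝ)), integral_const_mul]
    rw [show (fun a : Ω => Set.indicator {ω | h ω j = 1} (fun _ => (1:ℝ)) a)
        = fun a => Set.indicator {ω | h ω j = 1} (1 : Ω → ℝ) a from rfl,
      integral_indicator_one hset, measureReal_def, hunif j]
    simp [ENNReal.toReal_div]
  have hzero : ∀ i j : Fin n, i ≠ j → ∫ ω, h ω i * h ω j ∂μ = 0 := by
    intro i j hij
    have hcard : ({i, j} : Finset (Fin n)).card ≤ 4 := by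
      have := Finset.card_insert_le i ({j} : Finset (Fin n))
      simp at this ⊢; omega
    have hind := h4wise {i, j} hcard
    have hii : i ∈ ({i, j} : Finset (Fin n)) := by simp
    have hjj : j ∈ ({i, j} : Finset (Fin n)) := by simp
    have hne : (⟨i, hii⟩ : ({i, j} : Finset (Fin n))) ≠ ⟨j, hjj⟩ := by
      intro hc; exact hij (congrArg Subtype.val hc)
    have hIJ : IndepFun (fun ω => h ω i) (fun ω => h ω j) μ := hind.indepFun hne
    have := hIJ.integral_mul_eq_mul_integral (hint i).aestronglyMeasurable (hint j).aestronglyMeasurable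
    rw [show (fun ω => h ω i * h ω j) = (fun ω => h ω i) * (fun ω => h ω j) from rfl,
      this, hmean i, zero_mul]
  have hdiag : ∀ i : Fin n, ∫ ω, h ω i * h ω i ∂μ = 1 := by
    intro i
    have : (fun ω => h ω i * h ω i) = fun _ => (1:ℝ) := by
      funext ω; rcases hval ω i with hv | hv <;> simp [hv]
    rw [this]; simp
  have key : ∀ ω, (∑ j, h ω j * D j) ^ 2
      = ∑ i, ∑ j, D i * D j * (h ω i * h ω j) := by
    intro ω
    rw [sq, Finset.sum_mul_sum]
    apply Finset.sum_congr rfl; intro i _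
    apply Finset.sum_congr rfl; intro j _
    ring
  simp only [key]
  rw [integral_finset_sum _ (fun i _ => integrable_finset_sum _
      (fun j _ => (hintmul i j).const_mul (D i * D j)))]
  have : ∀ i ∈ Finset.univ, ∫ ω, ∑ j, D i * D j * (h ω i * h ω j) ∂μ = D i ^ 2 := by
    intro i _
    rw [integral_finset_sum _ (fun j _ => (hintmul i j).const_mul (D i * D j))]
    have : ∀ j ∈ Finset.univ, ∫ ω, D i * D j * (h ω i * h ω j) ∂μ
        = if j = i then D i ^ 2 else 0 := by
      intro j _
      rw [integral_const_mul]
      by_cases hij : j = i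
      · subst hij; rw [hdiag j, if_pos rfl]; ring
      · rw [hzero i j (fun hc => hij hc.symm), if_neg hij, mul_zero]
    rw [Finset.sum_congr rfl this, Finset.sum_ite_eq' Finset.univ i (fun _ => D i ^ 2)]
    simp
  rw [Finset.sum_congr rfl this]
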